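/- Let f be a nonnegative polynomial on R^n with f(0) = 0. Then for every vertex α of the Newton diagram of f, the exponent α has all coordinates even and the coefficient f_α is strictly positive. -/

import Mathlib

open MvPolynomial Filter Topology

noncomputable section
attribute [local instance] Classical.propDecidable

/-- The real point associated to an exponent vector. -/
def expPt {n : ℕ} (α : Fin n →₀ ℕ) : Fin n → ℝ := fun i => (α i : ℝ)

/-- `Δ(f) = ⋃_{α ∈ supp f} (α + ℝ₊ⁿ)`. -/
def DeltaSet {n : ℕ} (f : MvPolynomial (Fin n) ℝ) : Set (Fin n → ℝ) :=
  {x | ∃ α ∈ f.support, ∀ i, (α i : ℝ) ≤ x i}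

/-- The Newton polyhedron `conv Δ(f)`. -/
def NewtonPolyhedron {n : ℕ} (f : MvPolynomial (Fin n) ℝ) : Set (Fin n → ℝ) :=
  convexHull ℝ (DeltaSet f)

/-- `F` is a (nonempty) face of `P`, cut out by a supporting hyperplane. -/
def IsFaceOf {n : ℕ} (P F : Set (Fin n → ℝ)) : Prop :=
  F.Nonempty ∧ ∃ (A : Fin n → ℝ) (c : ℝ), A ≠ 0 ∧ (∀ x ∈ P, c ≤ ∑ i, A i * x i) ∧
    F = {x ∈ P | ∑ i, A i * x i = c}

/-- A compact face of `P`. -/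
def IsCompactFaceOf {n : ℕ} (P F : Set (Fin n → ℝ)) : Prop := IsFaceOf P F ∧ IsCompact F

/-- The Newton diagram: the union of the compact faces of the Newton polyhedron. -/
def NewtonDiagram {n : ℕ} (f : MvPolynomial (Fin n) ℝ) : Set (Fin n → ℝ) :=
  ⋃ F ∈ {F | IsCompactFaceOf (NewtonPolyhedron f) F}, F

/-- A maximal (compact) face of the Newton diagram of `f`. -/
def IsMaximalFace {n : ℕ} (f : MvPolynomial (Fin n) ℝ) (γ : Set (Fin n → ℝ)) : Prop :=
  IsCompactFaceOf (NewtonPolyhedron f) γ ∧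
    ∀ γ', IsCompactFaceOf (NewtonPolyhedron f) γ' → γ ⊆ γ' → γ' = γ

/-- `f_γ`: the sum of the terms of `f` whose exponents lie in `γ`. -/
def facePart {n : ℕ} (f : MvPolynomial (Fin n) ℝ) (γ : Set (Fin n → ℝ)) :
    MvPolynomial (Fin n) ℝ :=
  ∑ α ∈ f.support.filter (fun α => expPt α ∈ γ), monomial α (coeff α f)

/-- Sums of squares of polynomials supported in `(1/2)γ`, i.e. whose squared factors only
involve exponents `α` with `2α ∈ γ`. -/
def sosHalfSupported {n : ℕ} (γ : Set (Fin n → ℝ)) : Set (MvPolynomial (Fin n) ℝ) :=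
  {p | ∃ l : Multiset (MvPolynomial (Fin n) ℝ),
    (∀ q ∈ l, ∀ α ∈ q.support, (2 : ℝ) • expPt α ∈ γ) ∧ p = (l.map (· ^ 2)).sum}

/-- Algebraic characterization of membership in the relative interior of a convex set `C`:
`x ∈ C` and every segment from a point of `C` to `x` can be prolonged beyond `x` within `C`. -/
def MemRint {V : Type*} [AddCommGroup V] [Module ℝ V] (C : Set V) (x : V) : Prop :=
  x ∈ C ∧ ∀ y ∈ C, ∃ μ : ℝ, 1 < μ ∧ μ • x + (1 - μ) • y ∈ C

/-- `Δ_E(f)`: union of `α + ℝ₊ⁿ` over the even exponents `α` in the support of `f`. -/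
def DeltaESet {n : ℕ} (f : MvPolynomial (Fin n) ℝ) : Set (Fin n → ℝ) :=
  {x | ∃ α ∈ f.support, (∀ i, Even (α i)) ∧ ∀ i, (α i : ℝ) ≤ x i}

/-- `α ∈ bconv E`: `α` is a binary (dyadic) convex combination with full digits of even
integer points of `E`. -/
def MemBconv {n : ℕ} (E : Set (Fin n → ℝ)) (α : Fin n →₀ ℕ) : Prop :=
  ∃ (t N : ℕ) (A : Fin t → Fin n →₀ ℕ) (δ : Fin t → Fin N → Bool),
    0 < t ∧
    (∀ s, expPt (A s) ∈ E ∧ ∀ i, Even (A s i)) ∧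
    (∀ s : Fin t, 0 < ∑ k : Fin N, (if δ s k then ((2 : ℚ) ^ (k.1 + 1))⁻¹ else 0)) ∧
    (∑ s : Fin t, ∑ k : Fin N, (if δ s k then ((2 : ℚ) ^ (k.1 + 1))⁻¹ else 0)) = 1 ∧
    (∀ k : Fin N, ∃ s, δ s k = true) ∧
    (∀ i, (α i : ℚ) = ∑ s : Fin t,
      (∑ k : Fin N, (if δ s k then ((2 : ℚ) ^ (k.1 + 1))⁻¹ else 0)) * (A s i : ℚ))

/-- `f` has a regular Newton polyhedron: every vertex of `Γ(f)` is even with positive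
coefficient, and for each maximal face `γ` every "bad" exponent of `f` inside
`conv Δ(f_γ) \ γ` lies in `bconv Δ_E(f_γ)`. -/
def RegularNewtonPolyhedron {n : ℕ} (f : MvPolynomial (Fin n) ℝ) : Prop :=
  (∀ α : Fin n →₀ ℕ, expPt α ∈ Set.extremePoints ℝ (NewtonPolyhedron f) →
    (∀ i, Even (α i)) ∧ 0 < coeff α f) ∧
  (∀ γ, IsMaximalFace f γ → ∀ α ∈ f.support,
    expPt α ∈ convexHull ℝ (DeltaSet (facePart f γ)) → expPt α ∉ γ →
    ((¬ ∀ i, Even (α i)) ∨ coeff α f < 0) →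
    MemBconv (DeltaESet (facePart f γ)) α)

private lemma expPt_inj {n : ℕ} {a b : Fin n →₀ ℕ} (h : expPt a = expPt b) : a = b := by
  ext i
  exact Nat.cast_injective (congrFun h i)

private lemma coeff_mul_sign_nonneg {n : ℕ} (f : MvPolynomial (Fin n) ℝ)
    (hnonneg : ∀ x : Fin n → ℝ, 0 ≤ MvPolynomial.eval x f)
    (α : Fin n →₀ ℕ) (u : Fin n → ℝ)
    (hmin : ∀ β ∈ f.support, β ≠ α → ∑ i, u i * (α i : ℝ) < ∑ i, u i * (β i : ℝ))
    (σ : Fin n → ℝ) :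
    0 ≤ MvPolynomial.coeff α f * ∏ i, σ i ^ α i := by
  by_cases hαs : α ∈ f.support
  · set L : (Fin n →₀ ℕ) → ℝ := fun β => ∑ i, u i * (β i : ℝ) with hL
    set g : ℝ → ℝ := fun s => ∑ β ∈ f.support,
      MvPolynomial.coeff β f * (∏ i, σ i ^ β i) * Real.exp (s * (L β - L α)) with hg
    have key : ∀ s : ℝ, g s =
        Real.exp (-(s * L α)) * MvPolynomial.eval (fun i => σ i * Real.exp (s * u i)) f := by
      intro s
      rw [MvPolynomial.eval_eq', Finset.mul_sum, hg]
      refine Finset.sum_congr rfl fun β _ => ?_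
      have h1 : ∀ i, (σ i * Real.exp (s * u i)) ^ β i
          = σ i ^ β i * Real.exp ((β i : ℝ) * (s * u i)) := by
        intro i
        rw [mul_pow, ← Real.exp_nat_mul]
      simp_rw [h1, Finset.prod_mul_distrib, ← Real.exp_sum]
      have hsum : ∑ i, (β i : ℝ) * (s * u i) = s * L β := by
        rw [hL, Finset.mul_sum]
        exact Finset.sum_congr rfl fun i _ => by ring
      rw [hsum, show s * (L β - L α) = -(s * L α) + s * L β by ring, Real.exp_add]
      ring
    have hgnn : ∀ s : ℝ, 0 ≤ g s := fun s => by
      rw [key s]; exact mul_nonneg (Real.exp_pos _).le (hnonneg _)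
    have hlim : Tendsto g atBot
        (𝓝 (∑ β ∈ f.support, if β = α then
          MvPolynomial.coeff α f * ∏ i, σ i ^ α i else 0)) := by
      rw [hg]
      refine tendsto_finset_sum _ fun β hβ => ?_
      by_cases hβα : β = α
      · subst hβα
        simp only [if_pos rfl, sub_self, mul_zero, Real.exp_zero, mul_one]
        exact tendsto_const_nhds
      · rw [if_neg hβα]
        have he : 0 < L β - L α := sub_pos.2 (hmin β hβ hβα)
        have h2 : Tendsto (fun s : ℝ => s * (L β - L α)) atBot atBot :=
          tendsto_id.atBot_mul_const he
        have h3 := (Real.tendsto_exp_atBot.comp h2).const_mul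
          (MvPolynomial.coeff β f * ∏ i, σ i ^ β i)
        simpa using h3
    have := ge_of_tendsto' hlim hgnn
    rwa [Finset.sum_ite_eq' f.support α
      (fun _ => MvPolynomial.coeff α f * ∏ i, σ i ^ α i), if_pos hαs] at this
  · rw [MvPolynomial.notMem_support_iff.mp hαs, zero_mul]


/-- If `f` is nonnegative on `ℝⁿ` with `f(0) = 0`, then every vertex of the Newton diagram
of `f` is an even exponent with strictly positive coefficient. -/
theorem vertex_even_pos_of_nonneg {n : ℕ} (f : MvPolynomial (Fin n) ℝ)
    (hnonneg : ∀ x : Fin n → ℝ, 0 ≤ MvPolynomial.eval x f)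
    (hf0 : MvPolynomial.eval (0 : Fin n → ℝ) f = 0)
    (α : Fin n →₀ ℕ) (hα : expPt α ∈ Set.extremePoints ℝ (NewtonPolyhedron f)) :
    (∀ i, Even (α i)) ∧ 0 < MvPolynomial.coeff α f := by
  have hDC : DeltaSet f ⊆ NewtonPolyhedron f := subset_convexHull ℝ _
  -- α belongs to the support of f
  have hαsupp : α ∈ f.support := by
    obtain ⟨β, hβ, hle⟩ := extremePoints_convexHull_subset hα
    by_contra hns
    have hβα : β ≠ α := fun h => hns (h ▸ hβ)
    set x₂ : Fin n → ℝ := fun i => 2 * (α i : ℝ) - (β i : ℝ) with hx₂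
    have hx₂D : x₂ ∈ DeltaSet f := ⟨β, hβ, fun i => by
      have := hle i; simp only [expPt] at this; simp only [hx₂]; linarith⟩
    have hseg : expPt α ∈ openSegment ℝ (expPt β) x₂ := by
      refine ⟨1/2, 1/2, by norm_num, by norm_num, by norm_num, ?_⟩
      funext i
      simp only [hx₂, Pi.add_apply, Pi.smul_apply, smul_eq_mul, expPt]
      ring
    have := (hα.2 (hDC ⟨β, hβ, fun i => le_refl _⟩) (hDC hx₂D) hseg)
    exact hβα (expPt_inj this)
  -- separating functional
  have hconvdiff : Convex ℝ (NewtonPolyhedron f \ {expPt α}) :=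
    (((convex_convexHull ℝ _).mem_extremePoints_iff_convex_diff).1 hα).2
  set T : Set (Fin n → ℝ) :=
    (expPt '' ((f.support : Set (Fin n →₀ ℕ)) \ {α})) ∪
      Set.range (fun i : Fin n => expPt α + Pi.single i 1) with hT
  have hTfin : T.Finite :=
    (((f.support.finite_toSet.diff)).image _).union (Set.finite_range _)
  have hTsub : T ⊆ NewtonPolyhedron f \ {expPt α} := by
    rintro y (⟨β, ⟨hβ, hβα⟩, rfl⟩ | ⟨i, rfl⟩)
    · refine ⟨hDC ⟨β, hβ, fun i => le_refl _⟩, ?_⟩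
      simp only [Set.mem_singleton_iff]
      exact fun h => hβα (expPt_inj h)
    · constructor
      · refine hDC ⟨α, hαsupp, fun j => ?_⟩
        simp only [Pi.add_apply, expPt]
        have : (0:ℝ) ≤ (Pi.single i 1 : Fin n → ℝ) j := by
          rcases eq_or_ne j i with rfl | h
          · simp
          · simp [Pi.single_apply, h]
        linarith
      · simp only [Set.mem_singleton_iff]
        intro h
        have := congrFun h i
        simp [expPt] at this
  have hnotmem : expPt α ∉ convexHull ℝ T := fun h =>
    (convexHull_min hTsub hconvdiff h).2 rfl
  obtain ⟨L, c, hc1, hc2⟩ := geometric_hahn_banach_point_closed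
    (convex_convexHull ℝ T) (hTfin.isCompact_convexHull (𝕜 := ℝ)).isClosed hnotmem
  set u : Fin n → ℝ := fun i => L (Pi.single i 1) with hu
  have hLv : ∀ v : Fin n → ℝ, L v = ∑ i, u i * v i := by
    intro v
    have h1 : v = ∑ i, v i • (Pi.single i 1 : Fin n → ℝ) := by
      have := Finset.univ_sum_single v
      rw [← this]
      refine Finset.sum_congr rfl fun i _ => ?_
      funext j
      rcases eq_or_ne j i with rfl | h
      · simp
      · simp [Pi.single_apply, h.symm, h]
    conv_lhs => rw [h1]
    rw [map_sum]
    exact Finset.sum_congr rfl fun i _ => by rw [map_smul, smul_eq_mul, hu, mul_comm]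
  have hmin : ∀ β ∈ f.support, β ≠ α →
      ∑ i, u i * (α i : ℝ) < ∑ i, u i * (β i : ℝ) := by
    intro β hβ hβα
    have hβT : expPt β ∈ convexHull ℝ T :=
      subset_convexHull ℝ T (Or.inl ⟨β, ⟨hβ, hβα⟩, rfl⟩)
    have := (hc2 _ hβT)
    have h2 := hc1.trans this
    rw [hLv (expPt α), hLv (expPt β)] at h2
    exact h2
  -- positivity
  have hpos : 0 < MvPolynomial.coeff α f := by
    have h := coeff_mul_sign_nonneg f hnonneg α u hmin 1
    simp only [Pi.one_apply, one_pow, Finset.prod_const_one, mul_one] at h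
    exact lt_of_le_of_ne h (Ne.symm (MvPolynomial.mem_support_iff.mp hαsupp))
  refine ⟨fun i => ?_, hpos⟩
  by_contra hodd
  rw [Nat.not_even_iff_odd] at hodd
  have h := coeff_mul_sign_nonneg f hnonneg α u hmin
    (fun j => if j = i then -1 else 1)
  have hprod : (∏ j, (if j = i then (-1:ℝ) else 1) ^ α j) = -1 := by
    rw [Finset.prod_eq_single i (fun j _ hj => by simp [hj]) (by simp)]
    simp [hodd.neg_one_pow]
  rw [hprod] at h
  nlinarith

end
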